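/- Let L > 0, c_l > 0, ρ ∈ (0,1) and γ_max > 0. For each t ∈ ℕ let f_t : E → ℝ be convex, differentiable and L-smooth, with a common minimizer x* ∈ E satisfying f_t(x*) ≤ f_t(y) for all y ∈ E and all t. Starting from x_0 ∈ E, define SGD iterates x_{t+1} = x_t − η_t∇f_t(x_t), where (η_t) are the AdaSLS stepsizes built from scales γ_t that satisfy the Armijo condition for f_t at x_t with parameter ρ and min{(1 − ρ)/L, γ_max} ≤ γ_t ≤ γ_max, and assume ∇f_t(x_t) ≠ 0 for all t. If c_l·ρ·√(γ_0‖∇f_0(x_0)‖²) ≥ 1, then for every t ∈ ℕ: (a) ‖x_{t+1} − x*‖² ≤ ‖x_t − x*‖² − η_t·⟨∇f_t(x_t), x_t − x*⟩; and (b) η_t ≥ ρ·min{(1 − ρ)/L, γ_max}² / (c_l²·‖x_0 − x*‖²). -/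

import Mathlib

open Finset RealInnerProductSpace

/-- AdaSLS under interpolation, per-step estimates: with convex `L`-smooth `f t`
sharing a common minimizer `x*`, SGD iterates with AdaSLS stepsizes built from
Armijo scales `min{(1−ρ)/L, γ_max} ≤ γ_t ≤ γ_max`, nonzero gradients at the
iterates, and `c_l ρ √(γ_0 ‖∇f_0(x_0)‖²) ≥ 1`, for every `t`:
(a) `‖x_{t+1} − x*‖² ≤ ‖x_t − x*‖² − η_t ⟨∇f_t(x_t), x_t − x*⟩`; and
(b) `η_t ≥ ρ·min{(1−ρ)/L, γ_max}² / (c_l² ‖x_0 − x*‖²)`. -/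
theorem stmt_15 {d : ℕ} (L c_l ρ γmax : ℝ) (hL : 0 < L) (hcl : 0 < c_l)
    (hρ : ρ ∈ Set.Ioo (0 : ℝ) 1) (hγmax : 0 < γmax)
    (xstar : EuclideanSpace ℝ (Fin d))
    (f : ℕ → EuclideanSpace ℝ (Fin d) → ℝ)
    (G : ℕ → EuclideanSpace ℝ (Fin d) → EuclideanSpace ℝ (Fin d))
    (x : ℕ → EuclideanSpace ℝ (Fin d)) (γ η : ℕ → ℝ)
    (hgrad : ∀ t y, HasGradientAt (f t) (G t y) y)
    (hconv : ∀ t u v, f t v ≥ f t u + ⟪G t u, v - u⟫)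
    (hsmooth : ∀ t u v, ‖G t u - G t v‖ ≤ L * ‖u - v‖)
    (hmin : ∀ t y, f t xstar ≤ f t y)
    (hGne : ∀ t, G t (x t) ≠ 0)
    (hArmijo : ∀ t, f t (x t - γ t • G t (x t)) ≤ f t (x t) - ρ * γ t * ‖G t (x t)‖ ^ 2)
    (hγlow : ∀ t, min ((1 - ρ) / L) γmax ≤ γ t)
    (hγhigh : ∀ t, γ t ≤ γmax)
    (hη0 : η 0 = γ 0 / (c_l * Real.sqrt (γ 0 * ‖G 0 (x 0)‖ ^ 2)))
    (hη : ∀ t, η (t + 1) = min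
      (γ (t + 1) /
        (c_l * Real.sqrt (∑ s ∈ range (t + 2), γ s * ‖G s (x s)‖ ^ 2)))
      (η t))
    (hx : ∀ t, x (t + 1) = x t - η t • G t (x t))
    (hscale : 1 ≤ c_l * ρ * Real.sqrt (γ 0 * ‖G 0 (x 0)‖ ^ 2)) :
    ∀ t : ℕ,
      ‖x (t + 1) - xstar‖ ^ 2 ≤
          ‖x t - xstar‖ ^ 2 - η t * ⟪G t (x t), x t - xstar⟫ ∧
      η t ≥ ρ * (min ((1 - ρ) / L) γmax) ^ 2 / (c_l ^ 2 * ‖x 0 - xstar‖ ^ 2) := by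
  -- abbreviations
  set S : ℕ → ℝ := fun t => ∑ s ∈ range (t + 1), γ s * ‖G s (x s)‖ ^ 2 with hS
  have hγminpos : 0 < min ((1 - ρ) / L) γmax :=
    lt_min (div_pos (by linarith [hρ.2]) hL) hγmax
  have hγpos : ∀ t, 0 < γ t := fun t => lt_of_lt_of_le hγminpos (hγlow t)
  have hNpos : ∀ t, 0 < ‖G t (x t)‖ ^ 2 :=
    fun t => pow_pos (norm_pos_iff.mpr (hGne t)) 2
  have hSpos : ∀ t, 0 < S t := by
    intro t
    apply Finset.sum_pos
    · intro s _; exact mul_pos (hγpos s) (hNpos s)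
    · exact ⟨0, Finset.mem_range.mpr (Nat.succ_pos t)⟩
  have hSmono : ∀ t, S t ≤ S (t + 1) := by
    intro t
    have : S (t + 1) = S t + γ (t + 1) * ‖G (t + 1) (x (t + 1))‖ ^ 2 :=
      Finset.sum_range_succ _ _
    nlinarith [mul_pos (hγpos (t + 1)) (hNpos (t + 1))]
  have hS0 : S 0 = γ 0 * ‖G 0 (x 0)‖ ^ 2 := by
    show ∑ s ∈ range 1, γ s * ‖G s (x s)‖ ^ 2 = _
    rw [Finset.sum_range_one]
  have hSfirst : ∀ t, γ 0 * ‖G 0 (x 0)‖ ^ 2 ≤ S t := by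
    intro t
    have := Finset.single_le_sum
      (f := fun s => γ s * ‖G s (x s)‖ ^ 2)
      (fun s _ => (mul_pos (hγpos s) (hNpos s)).le)
      (Finset.mem_range.mpr (Nat.succ_pos t))
    exact this
  have hsqrtpos : ∀ t, 0 < Real.sqrt (S t) := fun t => Real.sqrt_pos.mpr (hSpos t)
  have hdenpos : ∀ t, 0 < c_l * Real.sqrt (S t) := fun t => mul_pos hcl (hsqrtpos t)
  have hη0' : η 0 = γ 0 / (c_l * Real.sqrt (S 0)) := by rw [hη0, hS0]
  have hη' : ∀ t, η (t + 1) = min (γ (t + 1) / (c_l * Real.sqrt (S (t + 1)))) (η t) :=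
    fun t => hη t
  have hηpos : ∀ t, 0 < η t := by
    intro t
    induction t with
    | zero => rw [hη0']; exact div_pos (hγpos 0) (hdenpos 0)
    | succ n ih =>
      rw [hη' n]
      exact lt_min (div_pos (hγpos (n + 1)) (hdenpos (n + 1))) ih
  have hηub : ∀ t, η t ≤ γ t / (c_l * Real.sqrt (S t)) := by
    intro t
    cases t with
    | zero => rw [hη0']
    | succ n => rw [hη' n]; exact min_le_left _ _
  -- η t ≤ ρ * γ t
  have hηρ : ∀ t, η t ≤ ρ * γ t := by
    intro t
    have h1 : η t ≤ γ t / (c_l * Real.sqrt (S t)) := hηub t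
    have h2 : Real.sqrt (γ 0 * ‖G 0 (x 0)‖ ^ 2) ≤ Real.sqrt (S t) :=
      Real.sqrt_le_sqrt (hSfirst t)
    have h3 : 1 ≤ c_l * ρ * Real.sqrt (S t) := by
      nlinarith [mul_le_mul_of_nonneg_left h2 (mul_nonneg hcl.le hρ.1.le)]
    rw [le_div_iff₀ (hdenpos t)] at h1
    nlinarith [mul_le_mul_of_nonneg_left h3 (hηpos t).le,
      mul_le_mul_of_nonneg_left h1 hρ.1.le]
  -- key inequality from convexity + interpolation + Armijo
  have hkey : ∀ t, ρ * γ t * ‖G t (x t)‖ ^ 2 ≤ ⟪G t (x t), x t - xstar⟫ := by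
    intro t
    have h1 := hconv t (x t) xstar
    have h2 := hmin t (x t - γ t • G t (x t))
    have h3 := hArmijo t
    have h4 : ⟪G t (x t), xstar - x t⟫ = -⟪G t (x t), x t - xstar⟫ := by
      rw [← inner_neg_right]; congr 1; abel
    rw [h4] at h1
    linarith
  have hηdec : ∀ t, η (t + 1) ≤ η t := fun t => (hη' t) ▸ min_le_right _ _
  have hηanti : ∀ s t, s ≤ t → η t ≤ η s :=
    fun s t hst => antitone_nat_of_succ_le hηdec hst
  -- part (a)
  have ha : ∀ t, ‖x (t + 1) - xstar‖ ^ 2 ≤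
      ‖x t - xstar‖ ^ 2 - η t * ⟪G t (x t), x t - xstar⟫ := by
    intro t
    have hrw : x (t + 1) - xstar = (x t - xstar) - η t • G t (x t) := by
      rw [hx t]; abel
    rw [hrw, norm_sub_sq_real, real_inner_smul_right, norm_smul]
    have h5 : ⟪x t - xstar, G t (x t)⟫ = ⟪G t (x t), x t - xstar⟫ := real_inner_comm _ _
    rw [h5]
    have h6 : (‖η t‖ * ‖G t (x t)‖) ^ 2 = (η t) ^ 2 * ‖G t (x t)‖ ^ 2 := by
      rw [mul_pow, Real.norm_eq_abs, sq_abs]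
    rw [h6]
    nlinarith [hkey t, hηρ t, hηpos t, hNpos t,
      mul_le_mul_of_nonneg_left (hηρ t) (mul_nonneg (hηpos t).le (hNpos t).le)]
  -- x 0 ≠ xstar
  have hD0pos : 0 < ‖x 0 - xstar‖ ^ 2 := by
    rcases eq_or_ne (x 0) xstar with h | h
    · exfalso
      have h0 := hkey 0
      have hz : x 0 - xstar = 0 := sub_eq_zero.mpr h
      rw [hz, inner_zero_right] at h0
      nlinarith [mul_pos (mul_pos hρ.1 (hγpos 0)) (hNpos 0)]
    · exact pow_pos (norm_pos_iff.mpr (sub_ne_zero.mpr h)) 2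
  -- telescoping
  have htel : ∀ t, ∑ s ∈ range t, η s * ⟪G s (x s), x s - xstar⟫ ≤
      ‖x 0 - xstar‖ ^ 2 - ‖x t - xstar‖ ^ 2 := by
    intro t
    induction t with
    | zero => simp
    | succ n ih =>
      rw [Finset.sum_range_succ]
      have := ha n
      linarith
  -- ρ η_t S_t ≤ D₀²
  have hSbound : ∀ t, ρ * η t * S t ≤ ‖x 0 - xstar‖ ^ 2 := by
    intro t
    have h1 : ρ * η t * S t = ∑ s ∈ range (t + 1),
        ρ * η t * (γ s * ‖G s (x s)‖ ^ 2) := by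
      rw [hS, Finset.mul_sum]
    rw [h1]
    have h2 : ∑ s ∈ range (t + 1), ρ * η t * (γ s * ‖G s (x s)‖ ^ 2) ≤
        ∑ s ∈ range (t + 1), η s * ⟪G s (x s), x s - xstar⟫ := by
      apply Finset.sum_le_sum
      intro s hs
      have hst : s ≤ t := Nat.lt_succ_iff.mp (Finset.mem_range.mp hs)
      have h3 := hηanti s t hst
      have h4 := hkey s
      nlinarith [hηpos t, hηpos s, mul_pos (mul_pos hρ.1 (hγpos s)) (hNpos s)]
    have h5 := htel (t + 1)
    have h6 : (0:ℝ) ≤ ‖x (t + 1) - xstar‖ ^ 2 := sq_nonneg _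
    linarith
  -- lower bound η t ≥ γmin / (c_l √S_t)
  have hηlb : ∀ t, min ((1 - ρ) / L) γmax / (c_l * Real.sqrt (S t)) ≤ η t := by
    intro t
    induction t with
    | zero =>
      rw [hη0']
      exact div_le_div_of_nonneg_right (hγlow 0) (hdenpos 0).le
    | succ n ih =>
      rw [hη' n]
      refine le_min ?_ ?_
      · exact div_le_div_of_nonneg_right (hγlow (n + 1)) (hdenpos (n + 1)).le
      · refine le_trans ?_ ih
        apply div_le_div_of_nonneg_left hγminpos.le (hdenpos n)
        exact mul_le_mul_of_nonneg_left (Real.sqrt_le_sqrt (hSmono n)) hcl.le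
  -- conclude
  intro t
  refine ⟨ha t, ?_⟩
  have h1 : min ((1 - ρ) / L) γmax ≤ η t * (c_l * Real.sqrt (S t)) :=
    (div_le_iff₀ (hdenpos t)).mp (hηlb t)
  have h2 := hSbound t
  have hsq : Real.sqrt (S t) ^ 2 = S t := Real.sq_sqrt (hSpos t).le
  rw [ge_iff_le, div_le_iff₀ (by positivity)]
  have hm2 : (min ((1 - ρ) / L) γmax) ^ 2 ≤ (η t) ^ 2 * c_l ^ 2 * S t := by
    have he : (η t * (c_l * Real.sqrt (S t))) * (η t * (c_l * Real.sqrt (S t))) =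
        (η t) ^ 2 * c_l ^ 2 * S t := by
      linear_combination (η t) ^ 2 * c_l ^ 2 * hsq
    calc (min ((1 - ρ) / L) γmax) ^ 2
        = (min ((1 - ρ) / L) γmax) * (min ((1 - ρ) / L) γmax) := sq _
      _ ≤ (η t * (c_l * Real.sqrt (S t))) * (η t * (c_l * Real.sqrt (S t))) :=
          mul_le_mul h1 h1 hγminpos.le (mul_nonneg (hηpos t).le (hdenpos t).le)
      _ = (η t) ^ 2 * c_l ^ 2 * S t := he
  have hstep : ρ * ((η t) ^ 2 * c_l ^ 2 * S t) ≤
      η t * (c_l ^ 2 * ‖x 0 - xstar‖ ^ 2) := by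
    nlinarith [mul_le_mul_of_nonneg_left h2
      (mul_nonneg (hηpos t).le (pow_pos hcl 2).le)]
  nlinarith [mul_le_mul_of_nonneg_left hm2 hρ.1.le]
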